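/- The bivariate density f(x₁,x₂) = (1/2)·(1-Φ(max(|x₁|,|x₂|))) has standard normal marginals: for every x₁ ∈ ℝ, ∫_ℝ f(x₁,x₂) dx₂ = (2π)^{-1/2} e^{-x₁²/2}. -/

import Mathlib

open Real MeasureTheory Topology

/-- The standard normal CDF. -/
noncomputable def stdNormalCDF (t : ℝ) : ℝ :=
  ∫ s in Set.Iic t, (Real.sqrt (2 * Real.pi))⁻¹ * Real.exp (-s ^ 2 / 2)

namespace SqContourAux

open Set Filter

/-- The standard normal pdf. -/
noncomputable def phi (s : ℝ) : ℝ := (Real.sqrt (2 * Real.pi))⁻¹ * Real.exp (-s ^ 2 / 2)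

lemma phi_nonneg (s : ℝ) : 0 ≤ phi s :=
  mul_nonneg (inv_nonneg.2 (Real.sqrt_nonneg _)) (Real.exp_pos _).le

lemma phi_cont : Continuous phi := by
  unfold phi; fun_prop

lemma phi_eq : phi = fun s => (Real.sqrt (2 * Real.pi))⁻¹ * Real.exp (-(1/2) * s ^ 2) := by
  funext s
  rw [phi]
  ring_nf

lemma phi_integrable : Integrable phi := by
  rw [phi_eq]
  exact (integrable_exp_neg_mul_sq (by norm_num : (0:ℝ) < 1/2)).const_mul _

lemma sqrt_two_pi_pos : 0 < Real.sqrt (2 * Real.pi) :=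
  Real.sqrt_pos.mpr (by positivity)

lemma integral_phi : ∫ s, phi s = 1 := by
  rw [phi_eq, integral_const_mul, integral_gaussian,
    show Real.pi / (1/2) = 2 * Real.pi by ring]
  exact inv_mul_cancel₀ sqrt_two_pi_pos.ne'

lemma one_sub_cdf (t : ℝ) : 1 - stdNormalCDF t = ∫ s in Ioi t, phi s := by
  have h := intervalIntegral.integral_Iic_add_Ioi (b := t) (μ := volume)
    phi_integrable.integrableOn phi_integrable.integrableOn
  have h2 := integral_phi
  have : stdNormalCDF t = ∫ s in Iic t, phi s := rfl
  rw [this]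
  linarith

lemma cdf_le_one (t : ℝ) : stdNormalCDF t ≤ 1 := by
  have h := one_sub_cdf t
  have h2 : 0 ≤ ∫ s in Ioi t, phi s :=
    setIntegral_nonneg measurableSet_Ioi fun s _ => phi_nonneg s
  linarith

lemma hasDerivAt_cdf (t : ℝ) : HasDerivAt stdNormalCDF (phi t) t := by
  have key : stdNormalCDF = fun t => stdNormalCDF 0 + ∫ s in (0:ℝ)..t, phi s := by
    funext u
    have h := intervalIntegral.integral_Iic_sub_Iic (μ := volume) (a := (0:ℝ)) (b := u)
      phi_integrable.integrableOn phi_integrable.integrableOn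
    have h1 : stdNormalCDF u = ∫ s in Iic u, phi s := rfl
    have h2 : stdNormalCDF 0 = ∫ s in Iic (0:ℝ), phi s := rfl
    rw [h1, h2]
    linarith
  rw [key]
  exact ((phi_cont.integral_hasStrictDerivAt 0 t).hasDerivAt).const_add _

lemma hasDerivAt_negphi (s : ℝ) : HasDerivAt (fun u => -phi u) (s * phi s) s := by
  have h1 : HasDerivAt (fun u : ℝ => -u ^ 2 / 2) (-s) s := by
    have := ((hasDerivAt_pow 2 s).fun_neg).div_const 2
    refine this.congr_deriv ?_
    ring
  have h2 : HasDerivAt (fun u : ℝ => Real.exp (-u ^ 2 / 2))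
      (Real.exp (-s ^ 2 / 2) * (-s)) s := h1.exp
  have h3 := (h2.const_mul ((Real.sqrt (2 * Real.pi))⁻¹)).fun_neg
  refine h3.congr_deriv ?_
  unfold phi
  ring

lemma tendsto_phi : Tendsto phi atTop (𝓝 0) := by
  have h1 : Tendsto (fun s : ℝ => -s ^ 2 / 2) atTop atBot := by
    apply Tendsto.atBot_div_const (by norm_num : (0:ℝ) < 2)
    exact tendsto_neg_atBot_iff.mpr (tendsto_pow_atTop two_ne_zero)
  have h2 : Tendsto (fun s : ℝ => Real.exp (-s ^ 2 / 2)) atTop (𝓝 0) :=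
    Real.tendsto_exp_atBot.comp h1
  have h3 := h2.const_mul ((Real.sqrt (2 * Real.pi))⁻¹)
  rw [mul_zero] at h3
  exact h3

lemma integral_id_phi (t : ℝ) (ht : 0 ≤ t) :
    ∫ s in Ioi t, s * phi s = phi t := by
  have := integral_Ioi_of_hasDerivAt_of_nonneg' (a := t) (l := 0)
    (fun x _ => hasDerivAt_negphi x)
    (fun x hx => mul_nonneg (le_trans ht (le_of_lt hx)) (phi_nonneg x))
    (by simpa using tendsto_phi.neg)
  simpa using this

lemma integrableOn_id_phi (t : ℝ) (ht : 0 ≤ t) :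
    IntegrableOn (fun s => s * phi s) (Ioi t) := by
  exact integrableOn_Ioi_deriv_of_nonneg' (l := 0) (fun x _ => hasDerivAt_negphi x)
    (fun x hx => mul_nonneg (le_trans ht (le_of_lt hx)) (phi_nonneg x))
    (by simpa using tendsto_phi.neg)

lemma tail_le (t : ℝ) (ht : 0 ≤ t) : t * (1 - stdNormalCDF t) ≤ phi t := by
  rw [one_sub_cdf, ← integral_const_mul, ← integral_id_phi t ht]
  apply setIntegral_mono_on
  · exact (phi_integrable.integrableOn).const_mul t
  · exact integrableOn_id_phi t ht
  · exact measurableSet_Ioi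
  · intro s hs
    exact mul_le_mul_of_nonneg_right (le_of_lt hs) (phi_nonneg s)

lemma tendsto_tail : Tendsto (fun t => t * (1 - stdNormalCDF t)) atTop (𝓝 0) := by
  apply squeeze_zero' ?_ ?_ tendsto_phi
  · filter_upwards [eventually_ge_atTop (0:ℝ)] with t ht
    exact mul_nonneg ht (by linarith [cdf_le_one t])
  · filter_upwards [eventually_ge_atTop (0:ℝ)] with t ht
    exact tail_le t ht

noncomputable def G (t : ℝ) : ℝ := t * (1 - stdNormalCDF t) - phi t

lemma hasDerivAt_G (t : ℝ) : HasDerivAt G (1 - stdNormalCDF t) t := by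
  have h1 : HasDerivAt (fun u : ℝ => u * (1 - stdNormalCDF u))
      (1 * (1 - stdNormalCDF t) + t * (0 - phi t)) t :=
    (hasDerivAt_id t).mul ((hasDerivAt_const t (1:ℝ)).sub (hasDerivAt_cdf t))
  have h2 : HasDerivAt phi (-(t * phi t)) t := by
    simpa using (hasDerivAt_negphi t).fun_neg
  have h3 := h1.fun_sub h2
  refine h3.congr_deriv ?_
  ring

lemma tendsto_G : Tendsto G atTop (𝓝 0) := by
  have := tendsto_tail.sub tendsto_phi
  rw [sub_zero] at this
  exact this

lemma integral_tail (a : ℝ) :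
    ∫ t in Ioi a, (1 - stdNormalCDF t) = phi a - a * (1 - stdNormalCDF a) := by
  have := integral_Ioi_of_hasDerivAt_of_nonneg' (a := a) (l := 0)
    (fun x _ => hasDerivAt_G x)
    (fun x _ => by linarith [cdf_le_one x])
    tendsto_G
  rw [this]
  simp only [G, zero_sub, neg_sub]

lemma integrableOn_tail (a : ℝ) :
    IntegrableOn (fun t => 1 - stdNormalCDF t) (Ioi a) :=
  integrableOn_Ioi_deriv_of_nonneg' (fun x _ => hasDerivAt_G x)
    (fun x _ => by linarith [cdf_le_one x]) tendsto_G

end SqContourAux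

open SqContourAux Set

theorem square_contour_normal_marginals (x₁ : ℝ) :
    (∫ x₂ : ℝ, (1 / 2) * (1 - stdNormalCDF (max |x₁| |x₂|))) =
      (Real.sqrt (2 * Real.pi))⁻¹ * Real.exp (-x₁ ^ 2 / 2) := by
  set a := |x₁| with ha
  have ha0 : 0 ≤ a := abs_nonneg _
  have h1 : (∫ x₂ : ℝ, (1 / 2) * (1 - stdNormalCDF (max |x₁| |x₂|))) =
      2 * ∫ y in Ioi (0:ℝ), (1 / 2) * (1 - stdNormalCDF (max a y)) :=
    integral_comp_abs (f := fun y => (1 / 2) * (1 - stdNormalCDF (max a y)))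
  -- integrability on the two pieces
  have hIoc : IntegrableOn (fun y : ℝ => (1 / 2) * (1 - stdNormalCDF (max a y))) (Ioc 0 a) := by
    exact IntegrableOn.congr_fun
      (integrableOn_const (C := (1 / 2) * (1 - stdNormalCDF a)) measure_Ioc_lt_top.ne)
      (fun y hy => by rw [max_eq_left hy.2]) measurableSet_Ioc
  have hIoi : IntegrableOn (fun y : ℝ => (1 / 2) * (1 - stdNormalCDF (max a y))) (Ioi a) := by
    exact IntegrableOn.congr_fun ((integrableOn_tail a).const_mul (1/2 : ℝ))
      (fun y hy => by rw [max_eq_right (le_of_lt hy)]) measurableSet_Ioi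
  have hsplit : (∫ y in Ioi (0:ℝ), (1 / 2) * (1 - stdNormalCDF (max a y))) =
      (∫ y in Ioc 0 a, (1 / 2) * (1 - stdNormalCDF (max a y))) +
      ∫ y in Ioi a, (1 / 2) * (1 - stdNormalCDF (max a y)) := by
    rw [← setIntegral_union (Set.Ioc_disjoint_Ioi le_rfl) measurableSet_Ioi hIoc hIoi,
      Ioc_union_Ioi_eq_Ioi ha0]
  have hpiece1 : (∫ y in Ioc 0 a, (1 / 2) * (1 - stdNormalCDF (max a y))) =
      (1 / 2) * (1 - stdNormalCDF a) * a := by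
    rw [setIntegral_congr_fun measurableSet_Ioc
      (g := fun _ : ℝ => (1 / 2) * (1 - stdNormalCDF a))
      (fun y hy => by rw [max_eq_left hy.2]), setIntegral_const]
    rw [measureReal_def, Real.volume_Ioc, smul_eq_mul]
    rw [ENNReal.toReal_ofReal (by linarith)]
    ring
  have hpiece2 : (∫ y in Ioi a, (1 / 2) * (1 - stdNormalCDF (max a y))) =
      (1 / 2) * (phi a - a * (1 - stdNormalCDF a)) := by
    rw [setIntegral_congr_fun measurableSet_Ioi
      (g := fun y : ℝ => (1 / 2) * (1 - stdNormalCDF y))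
      (fun y hy => by rw [max_eq_right (le_of_lt hy)]), integral_const_mul, integral_tail]
  have hphi : phi a = (Real.sqrt (2 * Real.pi))⁻¹ * Real.exp (-x₁ ^ 2 / 2) := by
    rw [phi, ha, sq_abs]
  rw [h1, hsplit, hpiece1, hpiece2]
  rw [← hphi]
  ring
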